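/- Let c > 0, s > 1, and y_n = e^{c n/(log n)^s}. Then (y_{n+1}/log y_{n+1} − y_n/log y_n) is asymptotically equivalent to c·y_n / ((log y_n)·(log log y_n)^s) as n → ∞. -/

import Mathlib

open Real Filter

noncomputable def FF (c s : ℝ) (n : ℕ) : ℝ := c * n / Real.log n ^ s
noncomputable def DD (c s : ℝ) (n : ℕ) : ℝ :=
  c * (n + 1) / Real.log (n + 1) ^ s - c * n / Real.log n ^ s
noncomputable def rr (n : ℕ) : ℝ := Real.log n / Real.log (n + 1)

lemma hlogn : Tendsto (fun n : ℕ => Real.log n) atTop atTop :=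
  tendsto_log_atTop.comp tendsto_natCast_atTop_atTop

lemma hlogn1 : Tendsto (fun n : ℕ => Real.log (n + 1)) atTop atTop :=
  tendsto_log_atTop.comp (tendsto_atTop_add_const_right _ 1 tendsto_natCast_atTop_atTop)

lemma hr1 : Tendsto (fun n : ℕ => (n : ℝ) * (rr n - 1)) atTop (nhds 0) := by
  have hub : Tendsto (fun n : ℕ => -(Real.log (n + 1))⁻¹) atTop (nhds 0) := by
    simpa using (hlogn1.inv_tendsto_atTop).neg
  refine tendsto_of_tendsto_of_tendsto_of_le_of_le' hub tendsto_const_nhds ?_ ?_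
  · filter_upwards [eventually_ge_atTop 1] with n hn
    have hn1 : (1:ℝ) ≤ (n:ℝ) := by exact_mod_cast hn
    have hL1 : 0 < Real.log ((n:ℝ) + 1) := Real.log_pos (by linarith)
    have hkey : Real.log ((n:ℝ) + 1) - Real.log n ≤ 1 / n := by
      rw [← Real.log_div (by linarith) (by linarith)]
      have := Real.log_le_sub_one_of_pos (show (0:ℝ) < ((n:ℝ)+1)/n by positivity)
      calc Real.log (((n:ℝ)+1)/n) ≤ ((n:ℝ)+1)/n - 1 := this
        _ = 1 / n := by field_simp; ring
    have : (n:ℝ) * (rr n - 1) = -((n:ℝ) * (Real.log ((n:ℝ)+1) - Real.log n) / Real.log ((n:ℝ)+1)) := by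
      unfold rr; field_simp; ring
    rw [this, neg_le_neg_iff]
    have h2 : (n:ℝ) * (Real.log ((n:ℝ)+1) - Real.log n) ≤ 1 := by
      calc (n:ℝ) * (Real.log ((n:ℝ)+1) - Real.log n) ≤ (n:ℝ) * (1/n) :=
            mul_le_mul_of_nonneg_left hkey (by positivity)
        _ = 1 := by field_simp
    calc (n:ℝ) * (Real.log ((n:ℝ)+1) - Real.log n) / Real.log ((n:ℝ)+1)
        ≤ 1 / Real.log ((n:ℝ)+1) := by gcongr
      _ = (Real.log ((n:ℝ)+1))⁻¹ := one_div _
  · filter_upwards [eventually_ge_atTop 1] with n hn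
    have hn1 : (1:ℝ) ≤ (n:ℝ) := by exact_mod_cast hn
    have hL1 : 0 < Real.log ((n:ℝ) + 1) := Real.log_pos (by linarith)
    have hmono : Real.log (n:ℝ) ≤ Real.log ((n:ℝ)+1) :=
      Real.log_le_log (by linarith) (by linarith)
    have : rr n - 1 ≤ 0 := by
      unfold rr
      rw [sub_nonpos, div_le_one hL1]; exact hmono
    exact mul_nonpos_of_nonneg_of_nonpos (by positivity) this

lemma hr0 : Tendsto rr atTop (nhds 1) := by
  have h := hr1.mul (tendsto_inv_atTop_zero.comp tendsto_natCast_atTop_atTop)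
  rw [mul_zero] at h
  have h' : Tendsto (fun n : ℕ => rr n - 1) atTop (nhds 0) := by
    refine h.congr' ?_
    filter_upwards [eventually_ge_atTop 1] with n hn
    have hn0 : (n:ℝ) ≠ 0 := by positivity
    simp only [Function.comp]
    field_simp
  have := h'.add_const 1
  simpa using this

lemma hrlt : ∀ᶠ n : ℕ in atTop, rr n < 1 := by
  filter_upwards [eventually_ge_atTop 1] with n hn
  have hn1 : (1:ℝ) ≤ (n:ℝ) := by exact_mod_cast hn
  have hL1 : 0 < Real.log ((n:ℝ) + 1) := Real.log_pos (by linarith)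
  have : Real.log (n:ℝ) < Real.log ((n:ℝ)+1) := Real.log_lt_log (by linarith) (by linarith)
  unfold rr
  rw [div_lt_one hL1]; exact this

lemma hslope (s : ℝ) : Tendsto (fun n : ℕ => (rr n ^ s - 1) / (rr n - 1)) atTop (nhds s) := by
  have hder : HasDerivAt (fun x : ℝ => x ^ s) s 1 := by
    simpa using Real.hasDerivAt_rpow_const (p := s) (Or.inl one_ne_zero)
  have hs' := hasDerivAt_iff_tendsto_slope.mp hder
  have hcomp : Tendsto rr atTop (nhdsWithin 1 {(1:ℝ)}ᶜ) := by
    rw [tendsto_nhdsWithin_iff]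
    exact ⟨hr0, hrlt.mono fun n h => by simp [ne_of_lt h]⟩
  have := hs'.comp hcomp
  refine this.congr ?_
  intro n
  simp [slope_def_field, Function.comp]

lemma hn_rs (s : ℝ) : Tendsto (fun n : ℕ => (n : ℝ) * (rr n ^ s - 1)) atTop (nhds 0) := by
  have h := (hslope s).mul hr1
  rw [mul_zero] at h
  refine h.congr' ?_
  filter_upwards [hrlt] with n hn
  have : rr n - 1 ≠ 0 := by intro h'; nlinarith [sub_eq_zero.mp h']
  field_simp

lemma hrs1 (s : ℝ) : Tendsto (fun n : ℕ => rr n ^ s) atTop (nhds 1) := by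
  simpa using hr0.rpow_const (Or.inl one_ne_zero)

lemma L1 (c s : ℝ) : Tendsto (fun n : ℕ => DD c s n * Real.log n ^ s) atTop (nhds c) := by
  have h := ((hn_rs s).add (hrs1 s)).const_mul c
  rw [zero_add, mul_one] at h
  refine h.congr' ?_
  filter_upwards [eventually_ge_atTop 2] with n hn
  have hn2 : (2:ℝ) ≤ (n:ℝ) := by exact_mod_cast hn
  have hL0 : 0 < Real.log (n:ℝ) := Real.log_pos (by linarith)
  have hL1 : 0 < Real.log ((n:ℝ) + 1) := Real.log_pos (by linarith)
  have hrs : rr n ^ s = Real.log (n:ℝ) ^ s / Real.log ((n:ℝ)+1) ^ s :=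
    Real.div_rpow hL0.le hL1.le s
  have hp0 : (0:ℝ) < Real.log (n:ℝ) ^ s := Real.rpow_pos_of_pos hL0 s
  have hp1 : (0:ℝ) < Real.log ((n:ℝ)+1) ^ s := Real.rpow_pos_of_pos hL1 s
  unfold DD
  rw [hrs]
  field_simp
  ring

lemma L2 (c s : ℝ) (hc : 0 < c) (hs : 0 < s) : Tendsto (FF c s) atTop atTop := by
  have hu : Tendsto (fun x : ℝ => Real.log x ^ s / x) atTop (nhds 0) := by
    have := (isLittleO_log_rpow_rpow_atTop s one_pos).tendsto_div_nhds_zero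
    refine this.congr' ?_
    filter_upwards [eventually_ge_atTop (0:ℝ)] with x hx
    rw [Real.rpow_one]
  have hu' : Tendsto (fun n : ℕ => Real.log (n:ℝ) ^ s / n) atTop (nhds 0) :=
    hu.comp tendsto_natCast_atTop_atTop
  have hpos : ∀ᶠ n : ℕ in atTop, Real.log (n:ℝ) ^ s / n ∈ Set.Ioi (0:ℝ) := by
    filter_upwards [eventually_ge_atTop 2] with n hn
    have hn2 : (2:ℝ) ≤ (n:ℝ) := by exact_mod_cast hn
    have hL0 : 0 < Real.log (n:ℝ) := Real.log_pos (by linarith)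
    exact div_pos (Real.rpow_pos_of_pos hL0 s) (by linarith)
  have hmem : Tendsto (fun n : ℕ => Real.log (n:ℝ) ^ s / n) atTop (nhdsWithin 0 (Set.Ioi 0)) :=
    tendsto_nhdsWithin_iff.mpr ⟨hu', hpos⟩
  have hinv := tendsto_inv_nhdsGT_zero.comp hmem
  have hdiv : Tendsto (fun n : ℕ => (n:ℝ) / Real.log (n:ℝ) ^ s) atTop atTop := by
    refine hinv.congr fun n => ?_
    simp [Function.comp, inv_div]
  have := hdiv.const_mul_atTop hc
  refine this.congr fun n => ?_
  unfold FF; ring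

lemma hll : Tendsto (fun n : ℕ => Real.log (Real.log n) / Real.log n) atTop (nhds 0) := by
  have h := Real.isLittleO_log_id_atTop.tendsto_div_nhds_zero
  exact (h.comp hlogn).congr fun n => rfl

lemma L3 (c s : ℝ) (hc : 0 < c) :
    Tendsto (fun n : ℕ => Real.log (FF c s n) / Real.log n) atTop (nhds 1) := by
  have h1 : Tendsto (fun n : ℕ => Real.log c * (Real.log (n:ℝ))⁻¹ + 1
      - s * (Real.log (Real.log n) / Real.log n)) atTop (nhds 1) := by
    have hA : Tendsto (fun n : ℕ => Real.log c * (Real.log (n:ℝ))⁻¹) atTop (nhds 0) := by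
      simpa using hlogn.inv_tendsto_atTop.const_mul (Real.log c)
    have := (hA.add_const 1).sub (hll.const_mul s)
    simpa using this
  refine h1.congr' ?_
  filter_upwards [eventually_ge_atTop 3] with n hn
  have hn3 : (3:ℝ) ≤ (n:ℝ) := by exact_mod_cast hn
  have hL0 : 1 < Real.log (n:ℝ) := by
    have : Real.exp 1 < 3 := by
      have := Real.exp_one_lt_d9; linarith
    calc 1 = Real.log (Real.exp 1) := (Real.log_exp 1).symm
      _ < Real.log (n:ℝ) := Real.log_lt_log (Real.exp_pos 1) (by linarith)
  have hlogF : Real.log (FF c s n) =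
      Real.log c + Real.log (n:ℝ) - s * Real.log (Real.log n) := by
    unfold FF
    rw [Real.log_div (by positivity) (by positivity : Real.log (n:ℝ) ^ s ≠ 0),
      Real.log_mul hc.ne' (by positivity : ((n:ℝ)) ≠ 0),
      Real.log_rpow (by linarith)]
  rw [hlogF]
  field_simp

theorem stmt7 (c s : ℝ) (hc : 0 < c) (hs : 1 < s) :
    Tendsto
      (fun n : ℕ =>
        (Real.exp (c * (n + 1) / Real.log (n + 1) ^ s)
              / Real.log (Real.exp (c * (n + 1) / Real.log (n + 1) ^ s))
            - Real.exp (c * n / Real.log n ^ s)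
              / Real.log (Real.exp (c * n / Real.log n ^ s)))
        / (c * Real.exp (c * n / Real.log n ^ s)
            / (Real.log (Real.exp (c * n / Real.log n ^ s))
                * Real.log (Real.log (Real.exp (c * n / Real.log n ^ s))) ^ s)))
      atTop (nhds 1) := by
  have hs0 : 0 < s := lt_trans one_pos hs
  have hlogs_top : Tendsto (fun n : ℕ => Real.log (n:ℝ) ^ s) atTop atTop :=
    (tendsto_rpow_atTop hs0).comp hlogn
  have hD0 : Tendsto (DD c s) atTop (nhds 0) := by
    have h := (L1 c s).mul hlogs_top.inv_tendsto_atTop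
    rw [mul_zero] at h
    refine h.congr' ?_
    filter_upwards [eventually_ge_atTop 2] with n hn
    have hn2 : (2:ℝ) ≤ (n:ℝ) := by exact_mod_cast hn
    have hp : (0:ℝ) < Real.log (n:ℝ) ^ s := Real.rpow_pos_of_pos (Real.log_pos (by linarith)) s
    simp only [Pi.inv_apply]
    field_simp
  have hDpos : ∀ᶠ n : ℕ in atTop, 0 < DD c s n := by
    have h1 : ∀ᶠ n : ℕ in atTop, 0 < DD c s n * Real.log (n:ℝ) ^ s :=
      (L1 c s).eventually (eventually_gt_nhds hc)
    filter_upwards [h1, eventually_ge_atTop 2] with n h hn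
    have hn2 : (2:ℝ) ≤ (n:ℝ) := by exact_mod_cast hn
    have hp : (0:ℝ) < Real.log (n:ℝ) ^ s := Real.rpow_pos_of_pos (Real.log_pos (by linarith)) s
    nlinarith
  have hFpos : ∀ᶠ n : ℕ in atTop, 1 < FF c s n := (L2 c s hc hs0).eventually_gt_atTop 1
  have hexp : Tendsto (fun n : ℕ => (Real.exp (DD c s n) - 1) / DD c s n) atTop (nhds 1) := by
    have hder := Real.hasDerivAt_exp 0
    rw [Real.exp_zero] at hder
    have hsl := hasDerivAt_iff_tendsto_slope.mp hder
    have hcomp : Tendsto (DD c s) atTop (nhdsWithin 0 {(0:ℝ)}ᶜ) :=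
      tendsto_nhdsWithin_iff.mpr ⟨hD0, hDpos.mono fun n h => by simp [ne_of_gt h]⟩
    refine (hsl.comp hcomp).congr fun n => ?_
    simp [slope_def_field, Function.comp]
  have hinvF : Tendsto (fun n : ℕ => (FF c s n)⁻¹) atTop (nhds 0) :=
    (L2 c s hc hs0).inv_tendsto_atTop
  have hq : Tendsto (fun n : ℕ => FF c s n / (FF c s n + DD c s n)) atTop (nhds 1) := by
    have hd : Tendsto (fun n : ℕ => 1 + DD c s n * (FF c s n)⁻¹) atTop (nhds 1) := by
      have := (hD0.mul hinvF).const_add (1:ℝ)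
      simpa using this
    have h' := hd.inv₀ one_ne_zero
    rw [inv_one] at h'
    refine h'.congr' ?_
    filter_upwards [hDpos, hFpos] with n hD hF
    have hF0 : (0:ℝ) < FF c s n := lt_trans one_pos hF
    have hFD : (0:ℝ) < FF c s n + DD c s n := by linarith
    field_simp
  have h2 : Tendsto (fun n : ℕ => DD c s n * Real.log (n:ℝ) ^ s / c) atTop (nhds 1) := by
    have := (L1 c s).div_const c
    rwa [div_self hc.ne'] at this
  have h3 : Tendsto (fun n : ℕ => (Real.log (FF c s n) / Real.log (n:ℝ)) ^ s) atTop (nhds 1) := by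
    simpa using (L3 c s hc).rpow_const (Or.inl one_ne_zero)
  have hG : Tendsto (fun n : ℕ => ((Real.exp (DD c s n) - 1) / DD c s n - (FF c s n)⁻¹)
      * (FF c s n / (FF c s n + DD c s n)) * (DD c s n * Real.log (n:ℝ) ^ s / c)
      * ((Real.log (FF c s n) / Real.log (n:ℝ)) ^ s)) atTop (nhds 1) := by
    have := (((hexp.sub hinvF).mul hq).mul h2).mul h3
    simpa using this
  refine hG.congr' ?_
  filter_upwards [hDpos, hFpos, eventually_ge_atTop 2] with n hD hF hn
  have hF0 : (0:ℝ) < FF c s n := lt_trans one_pos hF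
  have hn2 : (2:ℝ) ≤ (n:ℝ) := by exact_mod_cast hn
  have hL0 : 0 < Real.log (n:ℝ) := Real.log_pos (by linarith)
  have hLs : (0:ℝ) < Real.log (n:ℝ) ^ s := Real.rpow_pos_of_pos hL0 s
  have hlogF : 0 < Real.log (FF c s n) := Real.log_pos hF
  have hlogFs : (0:ℝ) < Real.log (FF c s n) ^ s := Real.rpow_pos_of_pos hlogF s
  have hFD : (0:ℝ) < FF c s n + DD c s n := by linarith
  have e1 : c * ((n:ℝ) + 1) / Real.log ((n:ℝ) + 1) ^ s = FF c s n + DD c s n := by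
    unfold FF DD; ring
  have e2 : c * (n:ℝ) / Real.log (n:ℝ) ^ s = FF c s n := rfl
  simp only [e1, e2, Real.log_exp]
  rw [Real.exp_add]
  rw [Real.div_rpow hlogF.le hL0.le]
  have hexpF : (0:ℝ) < Real.exp (FF c s n) := Real.exp_pos _
  field_simp
  ring
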